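/- Let f be a random variable and x_1, …, x_n random variables, all taking values in finite sets on a common probability space. Let K_1, …, K_g ⊆ [n] and E_1^1, …, E_1^g ⊆ [n] be index sets, and let d^1, …, d^g be further random variables (the data downloaded during the eavesdropped repairs in group i). Writing x_S for the tuple (x_i)_{i∈S}, assume: (i) security: I(f; (x_{E_1^1 ∪ … ∪ E_1^g}, d^1, …, d^g)) = 0; and (ii) reconstruction: H(f | x_{K_1 ∪ … ∪ K_g}) = 0. Then H(f) ≤ ∑_{i=1}^{g} H( x_{K_i} | x_{E_1^i}, d^i ). -/
import Mathlib


/-! Finite-probability-space Shannon entropy framework. -/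

/-- `p` is a probability mass function on the finite sample space `Ω`. -/
def IsPMF {Ω : Type} [Fintype Ω] (p : Ω → ℝ) : Prop :=
  (∀ ω, 0 ≤ p ω) ∧ ∑ ω, p ω = 1

/-- Probability that the random variable `X` takes the value `x`. -/
noncomputable def prEq {Ω : Type} [Fintype Ω] (p : Ω → ℝ) {S : Type} [DecidableEq S]
    (X : Ω → S) (x : S) : ℝ :=
  ∑ ω, if X ω = x then p ω else 0

/-- Shannon entropy (base `b`) of the random variable `X` on the finite probability
space `(Ω, p)`.  Terms with probability `0` vanish since `Real.logb b 0 = 0`. -/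
noncomputable def entH {Ω : Type} [Fintype Ω] (b : ℝ) (p : Ω → ℝ) {S : Type}
    [Fintype S] [DecidableEq S] (X : Ω → S) : ℝ :=
  -∑ x, prEq p X x * Real.logb b (prEq p X x)

/-- Conditional entropy `H(X | Y) = H(X, Y) - H(Y)`. -/
noncomputable def condH {Ω : Type} [Fintype Ω] (b : ℝ) (p : Ω → ℝ) {S T : Type}
    [Fintype S] [DecidableEq S] [Fintype T] [DecidableEq T]
    (X : Ω → S) (Y : Ω → T) : ℝ :=
  entH b p (fun ω => (X ω, Y ω)) - entH b p Y

/-- Mutual information `I(X; Y) = H(X) + H(Y) - H(X, Y)`. -/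
noncomputable def mutI {Ω : Type} [Fintype Ω] (b : ℝ) (p : Ω → ℝ) {S T : Type}
    [Fintype S] [DecidableEq S] [Fintype T] [DecidableEq T]
    (X : Ω → S) (Y : Ω → T) : ℝ :=
  entH b p X + entH b p Y - entH b p (fun ω => (X ω, Y ω))

/-- Independence of two random variables on a finite probability space. -/
def IndepRV {Ω : Type} [Fintype Ω] (p : Ω → ℝ) {S T : Type} [DecidableEq S] [DecidableEq T]
    (X : Ω → S) (Y : Ω → T) : Prop :=
  ∀ x y, prEq p (fun ω => (X ω, Y ω)) (x, y) = prEq p X x * prEq p Y y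


section Helpers

set_option linter.unusedSectionVars false
variable {Ω : Type} [Fintype Ω] {b : ℝ} {p : Ω → ℝ}
variable {S T U : Type} [Fintype S] [DecidableEq S] [Fintype T] [DecidableEq T]
  [Fintype U] [DecidableEq U]

lemma prEq_nonneg (hp : IsPMF p) (X : Ω → S) (s : S) : 0 ≤ prEq p X s := by
  apply Finset.sum_nonneg
  intro ω _
  split <;> simp [hp.1 ω]

lemma sum_prEq (hp : IsPMF p) (X : Ω → S) : ∑ s, prEq p X s = 1 := by
  unfold prEq
  rw [Finset.sum_comm]
  simp only [Finset.sum_ite_eq, Finset.mem_univ, if_true]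
  exact hp.2

lemma prEq_comp_le (hp : IsPMF p) (X : Ω → S) (φ : S → T) (s : S) :
    prEq p X s ≤ prEq p (fun ω => φ (X ω)) (φ s) := by
  apply Finset.sum_le_sum
  intro ω _
  by_cases h : X ω = s
  · simp [h, hp.1 ω]
  · simp only [h, if_false]
    split <;> simp [hp.1 ω]

lemma prEq_comp_fiber (X : Ω → S) (φ : S → T) (t : T) :
    prEq p (fun ω => φ (X ω)) t = ∑ s ∈ Finset.univ.filter (fun s => φ s = t), prEq p X s := by
  unfold prEq
  rw [Finset.sum_comm]
  congr 1
  funext ω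
  rw [Finset.sum_ite_eq]
  simp

/-- Grouping identity: sum over values of `X` weighting by a function of the
distribution of `φ ∘ X` equals the corresponding sum over values of `φ ∘ X`. -/
lemma grouping (X : Ω → S) (φ : S → T) (L : ℝ → ℝ) :
    ∑ s, prEq p X s * L (prEq p (fun ω => φ (X ω)) (φ s))
      = ∑ t, prEq p (fun ω => φ (X ω)) t * L (prEq p (fun ω => φ (X ω)) t) := by
  rw [← Finset.sum_fiberwise Finset.univ φ
    (fun s => prEq p X s * L (prEq p (fun ω => φ (X ω)) (φ s)))]
  apply Finset.sum_congr rfl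
  intro t _
  rw [prEq_comp_fiber X φ t, Finset.sum_mul]
  apply Finset.sum_congr rfl
  intro s hs
  rw [(Finset.mem_filter.mp hs).2, prEq_comp_fiber X φ t]

/-- Entropy can only decrease under taking a function of a random variable. -/
lemma entH_comp_le (hb : 1 < b) (hp : IsPMF p) (X : Ω → S) (φ : S → T) :
    entH b p (fun ω => φ (X ω)) ≤ entH b p X := by
  unfold entH
  rw [neg_le_neg_iff, ← grouping X φ (Real.logb b)]
  apply Finset.sum_le_sum
  intro s _
  rcases eq_or_lt_of_le (prEq_nonneg hp X s) with h | h
  · simp [← h]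
  · apply mul_le_mul_of_nonneg_left _ (le_of_lt h)
    exact Real.logb_le_logb_of_le hb h (prEq_comp_le hp X φ s)

/-- Variant with the composed variable given directly. -/
lemma entH_comp_le' (hb : 1 < b) (hp : IsPMF p) (X : Ω → S) (Y : Ω → T) (φ : S → T)
    (h : ∀ ω, Y ω = φ (X ω)) : entH b p Y ≤ entH b p X := by
  have : Y = fun ω => φ (X ω) := funext h
  rw [this]
  exact entH_comp_le hb hp X φ

/-- Gibbs-type inequality. -/
lemma gibbs (hb : 1 < b) {A : Type} [Fintype A] (q r : A → ℝ)
    (hq : ∀ a, 0 ≤ q a) (hr : ∀ a, 0 ≤ r a) (hpos : ∀ a, q a ≠ 0 → r a ≠ 0)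
    (hsum : ∑ a, r a ≤ ∑ a, q a) :
    ∑ a, q a * (Real.logb b (r a) - Real.logb b (q a)) ≤ 0 := by
  have hlb : 0 < Real.log b := Real.log_pos hb
  have step : ∀ a : A, q a * (Real.logb b (r a) - Real.logb b (q a))
      ≤ (r a - q a) / Real.log b := by
    intro a
    rcases eq_or_lt_of_le (hq a) with h | h
    · rw [← h]
      simpa using div_nonneg (hr a) (le_of_lt hlb)
    · have hra : 0 < r a := lt_of_le_of_ne (hr a) (Ne.symm (hpos a (ne_of_gt h)))
      rw [← Real.logb_div (ne_of_gt hra) (ne_of_gt h)]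
      have hlog : Real.log (r a / q a) ≤ r a / q a - 1 :=
        Real.log_le_sub_one_of_pos (by positivity)
      have h2 : q a * Real.log (r a / q a) ≤ r a - q a := by
        have := mul_le_mul_of_nonneg_left hlog (le_of_lt h)
        calc q a * Real.log (r a / q a) ≤ q a * (r a / q a - 1) := this
          _ = r a - q a := by field_simp
      calc q a * Real.logb b (r a / q a) = q a * Real.log (r a / q a) / Real.log b := by
            rw [Real.logb]; ring
        _ ≤ (r a - q a) / Real.log b := by
            exact div_le_div_of_nonneg_right h2 (le_of_lt hlb)
  calc ∑ a, q a * (Real.logb b (r a) - Real.logb b (q a))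
      ≤ ∑ a, (r a - q a) / Real.log b := Finset.sum_le_sum (fun a _ => step a)
    _ = (∑ a, r a - ∑ a, q a) / Real.log b := by
        rw [← Finset.sum_div, Finset.sum_sub_distrib]
    _ ≤ 0 := div_nonpos_of_nonpos_of_nonneg (by linarith) (le_of_lt hlb)

lemma sum_prEq_pair_left (X : Ω → S) (Y : Ω → T) (t : T) :
    ∑ s, prEq p (fun ω => (X ω, Y ω)) (s, t) = prEq p Y t := by
  unfold prEq
  rw [Finset.sum_comm]
  congr 1
  funext ω
  simp [Prod.ext_iff, ite_and, Finset.sum_ite_eq]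

lemma entH_submod (hb : 1 < b) (hp : IsPMF p) (X : Ω → S) (Y : Ω → T) (Z : Ω → U) :
    entH b p (fun ω => (X ω, Y ω, Z ω)) + entH b p Y
      ≤ entH b p (fun ω => (X ω, Y ω)) + entH b p (fun ω => (Y ω, Z ω)) := by
  have hlb : 0 < Real.log b := Real.log_pos hb
  let W : Ω → S × T × U := fun ω => (X ω, Y ω, Z ω)
  let q : S × T × U → ℝ := prEq p W
  let r : S × T × U → ℝ := fun a =>
    prEq p (fun ω => (X ω, Y ω)) (a.1, a.2.1) * prEq p (fun ω => (Y ω, Z ω)) a.2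
      / prEq p Y a.2.1
  have hq : ∀ a, 0 ≤ q a := fun a => prEq_nonneg hp W a
  have h12 : ∀ a : S × T × U, q a ≤ prEq p (fun ω => (X ω, Y ω)) (a.1, a.2.1) :=
    fun a => prEq_comp_le hp W (fun c => (c.1, c.2.1)) a
  have h23 : ∀ a : S × T × U, q a ≤ prEq p (fun ω => (Y ω, Z ω)) a.2 :=
    fun a => prEq_comp_le hp W (fun c => c.2) a
  have hY : ∀ a : S × T × U, q a ≤ prEq p Y a.2.1 :=
    fun a => prEq_comp_le hp W (fun c => c.2.1) a
  have hr : ∀ a, 0 ≤ r a := by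
    intro a
    apply div_nonneg (mul_nonneg (prEq_nonneg hp _ _) (prEq_nonneg hp _ _)) (prEq_nonneg hp _ _)
  have hpos : ∀ a, q a ≠ 0 → r a ≠ 0 := by
    intro a h
    have hq' : 0 < q a := lt_of_le_of_ne (hq a) (Ne.symm h)
    have : 0 < r a :=
      div_pos (mul_pos (lt_of_lt_of_le hq' (h12 a)) (lt_of_lt_of_le hq' (h23 a)))
        (lt_of_lt_of_le hq' (hY a))
    exact ne_of_gt this
  have hsum : ∑ a, r a ≤ ∑ a, q a := by
    have hq1 : ∑ a, q a = 1 := sum_prEq hp W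
    rw [hq1]
    have key : ∀ c : T × U, ∑ s, r (s, c) ≤ prEq p (fun ω => (Y ω, Z ω)) c := by
      intro c
      have e : ∑ s, r (s, c)
          = (∑ s, prEq p (fun ω => (X ω, Y ω)) (s, c.1))
            * (prEq p (fun ω => (Y ω, Z ω)) c / prEq p Y c.1) := by
        simp only [r, mul_div_assoc]
        rw [← Finset.sum_mul]
      rw [e, sum_prEq_pair_left]
      rcases eq_or_ne (prEq p Y c.1) 0 with h | h
      · rw [h]
        simpa using prEq_nonneg hp (fun ω => (Y ω, Z ω)) c
      · rw [mul_comm, div_mul_cancel₀ _ h]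
    calc ∑ a : S × T × U, r a = ∑ s, ∑ c : T × U, r (s, c) := Fintype.sum_prod_type _
      _ = ∑ c : T × U, ∑ s, r (s, c) := Finset.sum_comm
      _ ≤ ∑ c : T × U, prEq p (fun ω => (Y ω, Z ω)) c :=
          Finset.sum_le_sum (fun c _ => key c)
      _ = 1 := sum_prEq hp _
  have G := gibbs hb q r hq hr hpos hsum
  -- split the log of r
  have hsplit : ∀ a : S × T × U, q a * Real.logb b (r a)
      = q a * Real.logb b (prEq p (fun ω => (X ω, Y ω)) (a.1, a.2.1))
        + q a * Real.logb b (prEq p (fun ω => (Y ω, Z ω)) a.2)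
        - q a * Real.logb b (prEq p Y a.2.1) := by
    intro a
    rcases eq_or_ne (q a) 0 with h | h
    · simp [h]
    · have hq' : 0 < q a := lt_of_le_of_ne (hq a) (Ne.symm h)
      have n12 : prEq p (fun ω => (X ω, Y ω)) (a.1, a.2.1) ≠ 0 :=
        ne_of_gt (lt_of_lt_of_le hq' (h12 a))
      have n23 : prEq p (fun ω => (Y ω, Z ω)) a.2 ≠ 0 :=
        ne_of_gt (lt_of_lt_of_le hq' (h23 a))
      have nY : prEq p Y a.2.1 ≠ 0 := ne_of_gt (lt_of_lt_of_le hq' (hY a))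
      show q a * Real.logb b (_ * _ / _) = _
      rw [Real.logb_div (mul_ne_zero n12 n23) nY, Real.logb_mul n12 n23]
      ring
  have e12 : ∑ a : S × T × U, q a * Real.logb b (prEq p (fun ω => (X ω, Y ω)) (a.1, a.2.1))
      = ∑ c : S × T, prEq p (fun ω => (X ω, Y ω)) c
          * Real.logb b (prEq p (fun ω => (X ω, Y ω)) c) :=
    grouping W (fun c => (c.1, c.2.1)) (Real.logb b)
  have e23 : ∑ a : S × T × U, q a * Real.logb b (prEq p (fun ω => (Y ω, Z ω)) a.2)
      = ∑ c : T × U, prEq p (fun ω => (Y ω, Z ω)) c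
          * Real.logb b (prEq p (fun ω => (Y ω, Z ω)) c) :=
    grouping W (fun c => c.2) (Real.logb b)
  have eY : ∑ a : S × T × U, q a * Real.logb b (prEq p Y a.2.1)
      = ∑ c : T, prEq p Y c * Real.logb b (prEq p Y c) :=
    grouping W (fun c => c.2.1) (Real.logb b)
  have expand : ∑ a, q a * (Real.logb b (r a) - Real.logb b (q a))
      = (∑ a, q a * Real.logb b (r a)) - (∑ a, q a * Real.logb b (q a)) := by
    rw [← Finset.sum_sub_distrib]
    apply Finset.sum_congr rfl
    intro a _
    ring
  have expand2 : ∑ a, q a * Real.logb b (r a)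
      = (∑ a : S × T × U, q a * Real.logb b (prEq p (fun ω => (X ω, Y ω)) (a.1, a.2.1)))
        + (∑ a : S × T × U, q a * Real.logb b (prEq p (fun ω => (Y ω, Z ω)) a.2))
        - (∑ a : S × T × U, q a * Real.logb b (prEq p Y a.2.1)) := by
    rw [Finset.sum_congr rfl (fun a _ => hsplit a), Finset.sum_sub_distrib,
      Finset.sum_add_distrib]
  rw [expand, expand2, e12, e23, eY] at G
  have d3 : entH b p (fun ω => (X ω, Y ω, Z ω)) = -∑ a, q a * Real.logb b (q a) := rfl
  have d12 : entH b p (fun ω => (X ω, Y ω))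
      = -∑ c : S × T, prEq p (fun ω => (X ω, Y ω)) c
          * Real.logb b (prEq p (fun ω => (X ω, Y ω)) c) := rfl
  have d23 : entH b p (fun ω => (Y ω, Z ω))
      = -∑ c : T × U, prEq p (fun ω => (Y ω, Z ω)) c
          * Real.logb b (prEq p (fun ω => (Y ω, Z ω)) c) := rfl
  have dY : entH b p Y = -∑ c : T, prEq p Y c * Real.logb b (prEq p Y c) := rfl
  rw [d3, d12, d23, dY]
  linarith

/-- Conditioning on more information reduces conditional entropy. -/
lemma cond_reduce (hb : 1 < b) (hp : IsPMF p) (X : Ω → S) (Z : Ω → T) (W : Ω → U)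
    (ψ : T → U) (hW : ∀ ω, W ω = ψ (Z ω)) :
    entH b p (fun ω => (X ω, Z ω)) + entH b p W
      ≤ entH b p (fun ω => (X ω, W ω)) + entH b p Z := by
  have sub := entH_submod hb hp X W Z
  have h1 : entH b p (fun ω => (X ω, Z ω)) ≤ entH b p (fun ω => (X ω, W ω, Z ω)) :=
    entH_comp_le' hb hp (fun ω => (X ω, W ω, Z ω)) _ (fun c => (c.1, c.2.2)) (fun ω => rfl)
  have h2 : entH b p (fun ω => (W ω, Z ω)) ≤ entH b p Z :=
    entH_comp_le' hb hp Z _ (fun z => (ψ z, z)) (fun ω => by rw [hW ω])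
  linarith

/-- Subadditivity of conditional entropy over a finite family. -/
lemma cond_subadd (hb : 1 < b) (hp : IsPMF p) {ι : Type} [DecidableEq ι]
    {St : ι → Type} [∀ i, Fintype (St i)] [∀ i, DecidableEq (St i)]
    (Y : ∀ i, Ω → St i) {T : Type} [Fintype T] [DecidableEq T] (Z : Ω → T)
    (A : Finset ι) :
    entH b p (fun ω => ((fun i : ↥A => Y i ω), Z ω)) - entH b p Z
      ≤ ∑ i ∈ A, (entH b p (fun ω => (Y i ω, Z ω)) - entH b p Z) := by
  induction A using Finset.induction_on with
  | empty =>
    simp only [Finset.sum_empty, sub_nonpos]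
    exact entH_comp_le' hb hp Z _
      (fun z => ((fun i : ↥(∅ : Finset ι) => (Finset.notMem_empty _ i.2).elim), z))
      (fun ω => by
        congr 1
        funext i
        exact (Finset.notMem_empty _ i.2).elim)
  | @insert a A' ha IH =>
    have sub := entH_submod hb hp (Y a) Z (fun ω => (fun i : ↥A' => Y i ω))
    have h1 : entH b p (fun ω => ((fun i : ↥(insert a A') => Y i ω), Z ω))
        ≤ entH b p (fun ω => (Y a ω, Z ω, (fun i : ↥A' => Y i ω))) := by
      apply entH_comp_le' hb hp _ _
        (fun c : St a × T × (∀ i : ↥A', St i) =>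
          ((fun i : ↥(insert a A') =>
            if h : (i : ι) = a then (by rw [h]; exact c.1) else
              c.2.2 ⟨i, Finset.mem_of_mem_insert_of_ne i.2 h⟩), c.2.1))
      intro ω
      refine Prod.ext ?_ rfl
      funext i
      dsimp only
      by_cases h : (i : ι) = a
      · rw [dif_pos h]
        obtain ⟨iv, hiv⟩ := i
        dsimp only at h ⊢
        subst h
        rfl
      · rw [dif_neg h]
    have h2 : entH b p (fun ω => (Z ω, (fun i : ↥A' => Y i ω)))
        ≤ entH b p (fun ω => ((fun i : ↥A' => Y i ω), Z ω)) :=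
      entH_comp_le' hb hp _ _ (fun c => (c.2, c.1)) (fun ω => rfl)
    rw [Finset.sum_insert ha]
    linarith

end Helpers

/-- **Group-wise upper bound on the secure file size of a locally repairable DSS**
(Lemma 7 of Rawat–Koyluoglu–Silberstein–Vishwanath).  `K i` indexes the nodes the data
collector contacts in the `i`-th local group, `E i` the storage-eavesdropped nodes of
that group, and `d i` the downloads observed in that group.  If the eavesdropper learns
nothing (`I(f; (x_{∪E_i}, d^1, …, d^g)) = 0`) and the data collector can reconstruct
(`H(f | x_{∪K_i}) = 0`), then `H(f) ≤ ∑ i, H(x_{K_i} | x_{E_i}, d^i)`. -/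
theorem lrc_secrecy_groupwise_bound
    {Ω : Type} [Fintype Ω] (b : ℝ) (hb : 1 < b) (p : Ω → ℝ) (hp : IsPMF p)
    (n g : ℕ)
    {F : Type} [Fintype F] [DecidableEq F] (f : Ω → F)
    {X : Fin n → Type} [∀ i, Fintype (X i)] [∀ i, DecidableEq (X i)] (x : ∀ i, Ω → X i)
    (K E : Fin g → Finset (Fin n))
    {D : Fin g → Type} [∀ i, Fintype (D i)] [∀ i, DecidableEq (D i)] (d : ∀ i, Ω → D i)
    -- (i) security: the eavesdropper's observations are independent of the file
    (hsec : mutI b p f (fun ω =>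
      ((fun i : ↥(Finset.univ.biUnion E) => x i ω), (fun i : Fin g => d i ω))) = 0)
    -- (ii) reconstruction from the contacted nodes
    (hrec : condH b p f (fun ω => fun i : ↥(Finset.univ.biUnion K) => x i ω) = 0) :
    entH b p f ≤ ∑ i : Fin g,
      condH b p (fun ω => fun j : ↥(K i) => x j ω)
        (fun ω => ((fun j : ↥(E i) => x j ω), d i ω)) := by
  classical
  simp only [mutI] at hsec
  simp only [condH] at hrec ⊢
  set Z : Ω → ((∀ i : ↥(Finset.univ.biUnion E), X i) × (∀ i : Fin g, D i)) :=
    fun ω => ((fun i : ↥(Finset.univ.biUnion E) => x i ω), (fun i : Fin g => d i ω)) with hZ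
  set XK : Ω → (∀ i : ↥(Finset.univ.biUnion K), X i) :=
    fun ω => fun i : ↥(Finset.univ.biUnion K) => x i ω with hXK
  -- Step 2: H(f,Z) ≤ H(f,(XK,Z))
  have step2 : entH b p (fun ω => (f ω, Z ω)) ≤ entH b p (fun ω => (f ω, XK ω, Z ω)) :=
    entH_comp_le' hb hp (fun ω => (f ω, XK ω, Z ω)) _ (fun c => (c.1, c.2.2)) (fun ω => rfl)
  -- Step 3: submodularity
  have step3 := entH_submod hb hp f XK Z
  -- Step 5: XK is a function of the group tuples
  have step5 : entH b p (fun ω => (XK ω, Z ω))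
      ≤ entH b p (fun ω =>
          ((fun i : ↥(Finset.univ : Finset (Fin g)) => (fun j : ↥(K i.1) => x j ω)), Z ω)) := by
    apply entH_comp_le' hb hp _ _
      (fun c : (∀ i : ↥(Finset.univ : Finset (Fin g)), ∀ j : ↥(K i.1), X j.1) × _ =>
        ((fun j : ↥(Finset.univ.biUnion K) =>
          c.1 ⟨(Finset.mem_biUnion.mp j.2).choose, Finset.mem_univ _⟩
            ⟨j.1, (Finset.mem_biUnion.mp j.2).choose_spec.2⟩), c.2))
    intro ω
    rfl
  -- Step 6: conditional subadditivity over the groups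
  have step6 := cond_subadd hb hp
    (ι := Fin g) (St := fun i => ∀ j : ↥(K i), X j.1)
    (fun i ω => fun j : ↥(K i) => x j ω) Z Finset.univ
  -- Step 7: conditioning on less information
  have step7 : ∀ i : Fin g,
      entH b p (fun ω => ((fun j : ↥(K i) => x j ω), Z ω)) - entH b p Z
        ≤ entH b p (fun ω => ((fun j : ↥(K i) => x j ω),
            ((fun j : ↥(E i) => x j ω), d i ω)))
          - entH b p (fun ω => ((fun j : ↥(E i) => x j ω), d i ω)) := by
    intro i
    have := cond_reduce hb hp (fun ω => fun j : ↥(K i) => x j ω) Z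
      (fun ω => ((fun j : ↥(E i) => x j ω), d i ω))
      (fun c => ((fun j : ↥(E i) =>
        c.1 ⟨j.1, Finset.mem_biUnion.mpr ⟨i, Finset.mem_univ i, j.2⟩⟩), c.2 i))
      (fun ω => rfl)
    linarith
  have sum7 : ∑ i ∈ (Finset.univ : Finset (Fin g)),
        (entH b p (fun ω => ((fun j : ↥(K i) => x j ω), Z ω)) - entH b p Z)
      ≤ ∑ i : Fin g,
        (entH b p (fun ω => ((fun j : ↥(K i) => x j ω),
            ((fun j : ↥(E i) => x j ω), d i ω)))
          - entH b p (fun ω => ((fun j : ↥(E i) => x j ω), d i ω))) :=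
    Finset.sum_le_sum (fun i _ => step7 i)
  linarith
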